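/- Let p be a probability distribution on the integers with finite support, let n_min = min{n : p(n) > 0}, and suppose gcd{n − n_min : p(n) > 0} = 1. Then there exists a positive integer L and an integer K such that the L-fold convolution p^{*L} satisfies p^{*L}(K) > 0 and p^{*L}(K−1) > 0; consequently (1/2) Σ_n |p^{*L}(n) − p^{*L}(n+1)| < 1. -/

import Mathlib

open BigOperators

open Function Pointwise

/-- Convolution of two (finitely supported) distributions on ℤ. -/
noncomputable def conv (p q : ℤ → ℝ) : ℤ → ℝ := fun n => ∑' m, p m * q (n - m)

/-- `iterConv p L` is the L-fold convolution of p with itself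
(with `iterConv p 0` the point mass at 0). -/
noncomputable def iterConv (p : ℤ → ℝ) : ℕ → ℤ → ℝ
  | 0 => fun n => if n = 0 then 1 else 0
  | L + 1 => conv p (iterConv p L)

/-- If a finitely supported probability distribution p on ℤ with minimal
support point n_min satisfies gcd{n − n_min : p(n) > 0} = 1 (i.e. the shifted
support generates ℤ), then some L-fold convolution of p charges two
consecutive integers, and hence lies at total-variation distance < 1 from its
unit translate. -/
lemma conv_nonneg' (p q : ℤ → ℝ) (hp : ∀ n, 0 ≤ p n) (hq : ∀ n, 0 ≤ q n) (n : ℤ) :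
    0 ≤ conv p q n :=
  tsum_nonneg fun m => mul_nonneg (hp m) (hq _)

lemma conv_support_subset (p q : ℤ → ℝ) :
    support (conv p q) ⊆ support p + support q := by
  intro n hn
  by_contra h
  apply hn
  have : ∀ m, p m * q (n - m) = 0 := by
    intro m
    by_contra hm
    have hpm : p m ≠ 0 := fun h0 => hm (by simp [h0])
    have hqm : q (n - m) ≠ 0 := fun h0 => hm (by simp [h0])
    have := Set.add_mem_add (mem_support.2 hpm) (mem_support.2 hqm)
    simp only [add_sub_cancel] at this
    exact h this
  simp only [conv, Function.mem_support] at *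
  rw [tsum_congr this, tsum_zero]

lemma iterConv_nonneg (p : ℤ → ℝ) (hp : ∀ n, 0 ≤ p n) (L : ℕ) (n : ℤ) :
    0 ≤ iterConv p L n := by
  induction L generalizing n with
  | zero => simp only [iterConv]; positivity
  | succ L ih => exact conv_nonneg' _ _ hp ih n

lemma iterConv_support_finite (p : ℤ → ℝ) (hfin : (support p).Finite) (L : ℕ) :
    (support (iterConv p L)).Finite := by
  induction L with
  | zero =>
      apply Set.Finite.subset (Set.finite_singleton 0)
      intro n hn
      simp only [iterConv, mem_support, ne_eq] at hn
      rcases eq_or_ne n 0 with h | h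
      · exact h
      · simp [h] at hn
  | succ L ih =>
      exact Set.Finite.subset (hfin.add ih) (conv_support_subset p _)

lemma summable_fin (f : ℤ → ℝ) (h : (support f).Finite) : Summable f :=
  summable_of_finite_support h

lemma iterConv_one' (p : ℤ → ℝ) (n : ℤ) : iterConv p 1 n = p n := by
  show conv p (iterConv p 0) n = p n
  have : ∀ m : ℤ, m ≠ n → p m * (iterConv p 0) (n - m) = 0 := by
    intro m hm
    have : n - m ≠ 0 := by omega
    simp [iterConv, this]
  rw [conv, tsum_eq_single n this]
  simp [iterConv]

lemma conv_pos (p q : ℤ → ℝ) (hp : ∀ n, 0 ≤ p n) (hq : ∀ n, 0 ≤ q n)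
    (hfp : (support p).Finite) {m n : ℤ} (hm : 0 < p m) (hn : 0 < q n) :
    0 < conv p q (m + n) := by
  have hs : Summable (fun m' => p m' * q (m + n - m')) := by
    apply summable_fin
    apply Set.Finite.subset hfp
    intro x hx
    simp only [mem_support] at *
    exact fun h0 => hx (by simp [h0])
  have hle : p m * q (m + n - m) ≤ ∑' m', p m' * q (m + n - m') :=
    Summable.le_tsum hs m (fun j _ => mul_nonneg (hp j) (hq _))
  have : 0 < p m * q (m + n - m) := by
    simp only [add_sub_cancel_left]
    exact mul_pos hm hn
  exact lt_of_lt_of_le this hle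

lemma iterConv_add_pos (p : ℤ → ℝ) (hp : ∀ n, 0 ≤ p n) (hfp : (support p).Finite)
    {L M : ℕ} {a b : ℤ} (ha : 0 < iterConv p L a) (hb : 0 < iterConv p M b) :
    0 < iterConv p (L + M) (a + b) := by
  induction L generalizing a with
  | zero =>
      have : a = 0 := by
        by_contra h
        simp [iterConv, h] at ha
      simpa [this] using hb
  | succ L ih =>
      have hex : ∃ m, 0 < p m * iterConv p L (a - m) := by
        by_contra h
        push_neg at h
        have : ∀ m, p m * iterConv p L (a - m) = 0 := fun m =>
          le_antisymm (h m) (mul_nonneg (hp m) (iterConv_nonneg p hp L _))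
        have : conv p (iterConv p L) a = 0 := by
          rw [conv, tsum_congr this, tsum_zero]
        rw [show iterConv p (L + 1) = conv p (iterConv p L) from rfl] at ha
        linarith
      obtain ⟨m, hm⟩ := hex
      have hpm : 0 < p m := by
        rcases (hp m).lt_or_eq with h | h
        · exact h
        · rw [← h] at hm; simp at hm
      have hqm : 0 < iterConv p L (a - m) := by
        rcases (iterConv_nonneg p hp L (a - m)).lt_or_eq with h | h
        · exact h
        · rw [← h] at hm; simp at hm
      have := ih hqm
      have h2 := conv_pos p (iterConv p (L + M)) hp (iterConv_nonneg p hp _) hfp hpm this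
      have heq : m + (a - m + b) = a + b := by ring
      rw [heq] at h2
      have : L + 1 + M = (L + M) + 1 := by omega
      rw [this]
      exact h2

lemma conv_tsum (p q : ℤ → ℝ) (hfp : (support p).Finite) (hfq : (support q).Finite) :
    ∑' n, conv p q n = (∑' n, p n) * (∑' n, q n) := by
  classical
  set s := hfp.toFinset with hs
  set t := hfq.toFinset with ht
  have hps : ∀ m ∉ s, p m = 0 := by
    intro m hm; by_contra h; exact hm (hfp.mem_toFinset.2 h)
  have hqt : ∀ m ∉ t, q m = 0 := by
    intro m hm; by_contra h; exact hm (hfq.mem_toFinset.2 h)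
  have hsupp : ∀ n ∉ s + t, conv p q n = 0 := by
    intro n hn
    by_contra h
    have hmem := conv_support_subset p q (mem_support.2 h)
    obtain ⟨x, hx, y, hy, hxy⟩ := Set.mem_add.1 hmem
    exact hn (by
      rw [← hxy]
      exact Finset.add_mem_add (hfp.mem_toFinset.2 hx) (hfq.mem_toFinset.2 hy))
  rw [tsum_eq_sum hsupp, tsum_eq_sum hps, tsum_eq_sum hqt]
  have hconv : ∀ n, conv p q n = ∑ m ∈ s, p m * q (n - m) := by
    intro n
    exact tsum_eq_sum (fun m hm => by rw [hps m hm, zero_mul])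
  rw [Finset.sum_congr rfl (fun n _ => hconv n), Finset.sum_comm, Finset.sum_mul]
  refine Finset.sum_congr rfl fun m hm => ?_
  rw [← Finset.mul_sum]
  congr 1
  have hinj : Set.InjOn (fun n => n - m) ↑(s + t) := fun a _ b _ h => sub_left_injective h
  rw [← Finset.sum_image hinj]
  refine (Finset.sum_subset ?_ ?_).symm
  · intro k hk
    simp only [Finset.mem_image]
    exact ⟨m + k, Finset.add_mem_add hm hk, by ring⟩
  · intro x _ hx
    exact hqt x hx

lemma iterConv_tsum (p : ℤ → ℝ) (hfp : (support p).Finite) (hsum : ∑' n, p n = 1) (L : ℕ) :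
    ∑' n, iterConv p L n = 1 := by
  induction L with
  | zero =>
      show ∑' n : ℤ, (if n = 0 then (1:ℝ) else 0) = 1
      exact tsum_ite_eq (0 : ℤ) (fun _ => (1 : ℝ))
  | succ L ih =>
      show ∑' n, conv p (iterConv p L) n = 1
      rw [conv_tsum p _ hfp (iterConv_support_finite p hfp L), hsum, ih, one_mul]

lemma exists_consec (S : Set ℤ) (h : AddSubgroup.closure S = ⊤) :
    ∃ a b : ℤ, a ∈ AddSubmonoid.closure S ∧ b ∈ AddSubmonoid.closure S ∧ a = b + 1 := by
  set M := AddSubmonoid.closure S with hM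
  set G : AddSubgroup ℤ :=
    { carrier := {x | ∃ a ∈ M, ∃ b ∈ M, x = a - b}
      zero_mem' := ⟨0, zero_mem M, 0, zero_mem M, by ring⟩
      add_mem' := by
        rintro x y ⟨a, ha, b, hb, rfl⟩ ⟨c, hc, d, hd, rfl⟩
        exact ⟨a + c, add_mem ha hc, b + d, add_mem hb hd, by ring⟩
      neg_mem' := by
        rintro x ⟨a, ha, b, hb, rfl⟩
        exact ⟨b, hb, a, ha, by ring⟩ } with hG
  have hle : AddSubgroup.closure S ≤ G := by
    rw [AddSubgroup.closure_le]
    exact fun s hs => ⟨s, AddSubmonoid.subset_closure hs, 0, zero_mem M, by ring⟩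
  have h1 : (1 : ℤ) ∈ G := hle (h ▸ AddSubgroup.mem_top 1)
  obtain ⟨a, ha, b, hb, hab⟩ := h1
  exact ⟨a, b, ha, hb, by omega⟩

lemma tv_lt_one (q : ℤ → ℝ) (hq : ∀ n, 0 ≤ q n) (hfq : (support q).Finite)
    (hsum : ∑' n, q n = 1) {K : ℤ} (hK : 0 < q K) (hK1 : 0 < q (K - 1)) :
    (1 / 2) * ∑' n : ℤ, |q n - q (n + 1)| < 1 := by
  set ε := min (q (K - 1)) (q K) with hε
  have hεpos : 0 < ε := lt_min hK1 hK
  set r : ℤ → ℝ := fun n => if n = K - 1 then ε else 0 with hr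
  have hs1 : Summable q := summable_fin q hfq
  have hfq2 : (support fun n => q (n + 1)).Finite := by
    have : (support fun n => q (n + 1)) = (fun n : ℤ => n + 1) ⁻¹' support q := rfl
    rw [this]
    exact Set.Finite.preimage (fun a _ b _ h => by omega) hfq
  have hs2 : Summable (fun n => q (n + 1)) := summable_fin _ hfq2
  have hs3 : Summable r := by
    apply summable_fin
    apply Set.Finite.subset (Set.finite_singleton (K - 1))
    intro x hx
    simp only [mem_support, hr] at hx
    by_contra h
    simp only [Set.mem_singleton_iff] at h
    exact hx (if_neg h)
  have hsg : Summable (fun n => |q n - q (n + 1)|) := by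
    apply summable_fin
    apply Set.Finite.subset (hfq.union hfq2)
    intro x hx
    simp only [mem_support, Set.mem_union] at *
    by_contra h
    push_neg at h
    rw [h.1, h.2] at hx
    simp at hx
  have hpt : ∀ n, |q n - q (n + 1)| ≤ q n + q (n + 1) - 2 * r n := by
    intro n
    rcases eq_or_ne n (K - 1) with h | h
    · subst h
      simp only [hr, if_pos rfl, hε]
      have : K - 1 + 1 = K := by ring
      rw [this]
      rcases le_total (q (K - 1)) (q K) with h | h
      · rw [abs_of_nonpos (by linarith), min_eq_left h]; ring_nf; linarith
      · rw [abs_of_nonneg (by linarith), min_eq_right h]; ring_nf; linarith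
    · simp only [hr, if_neg h]
      have h1 := hq n
      have h2 := hq (n + 1)
      rw [abs_le]
      constructor <;> [linarith; linarith]
  have hshift : ∑' n, q (n + 1) = 1 := by
    have := (Equiv.addRight (1 : ℤ)).tsum_eq q
    simpa [hsum] using this
  have hrsum : ∑' n, r n = ε := tsum_ite_eq (K - 1) (fun _ => ε)
  have htot : ∑' n, |q n - q (n + 1)| ≤ 1 + 1 - 2 * ε := by
    have hRHS : Summable (fun n => q n + q (n + 1) - 2 * r n) :=
      (hs1.add hs2).sub (hs3.mul_left 2)
    have h1 := Summable.tsum_le_tsum hpt hsg hRHS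
    have h2 : ∑' n, (q n + q (n + 1) - 2 * r n) = 1 + 1 - 2 * ε := by
      rw [Summable.tsum_sub (hs1.add hs2) (hs3.mul_left 2), Summable.tsum_add hs1 hs2,
        tsum_mul_left, hsum, hshift, hrsum]
    linarith [h1, h2.le, h2.ge]
  linarith

lemma iterConv_pad (p : ℤ → ℝ) (hp : ∀ n, 0 ≤ p n) (hfp : (support p).Finite)
    {nmin : ℤ} (hnmin : 0 < p nmin) {L : ℕ} {x : ℤ} (h : 0 < iterConv p L x) (k : ℕ) :
    0 < iterConv p (L + k) (x + (k : ℤ) * nmin) := by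
  induction k with
  | zero => simpa using h
  | succ k ih =>
      have h1 : 0 < iterConv p 1 nmin := by rw [iterConv_one' p nmin]; exact hnmin
      have := iterConv_add_pos p hp hfp ih h1
      have heq : x + (k : ℤ) * nmin + nmin = x + ((k + 1 : ℕ) : ℤ) * nmin := by
        push_cast; ring
      have heL : (L + k) + 1 = L + (k + 1) := by omega
      rw [heq, heL] at this
      exact this

theorem exists_convolution_overlapping_translate
    (p : ℤ → ℝ) (hpnn : ∀ n, 0 ≤ p n)
    (hfin : (Function.support p).Finite)
    (hsum : ∑' n, p n = 1)
    (nmin : ℤ) (hnmin : 0 < p nmin) (hmin : ∀ n, 0 < p n → nmin ≤ n)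
    (hgcd : AddSubgroup.closure {m : ℤ | 0 < p (m + nmin)} = ⊤) :
    ∃ L : ℕ, 0 < L ∧ ∃ K : ℤ,
      0 < iterConv p L K ∧ 0 < iterConv p L (K - 1) ∧
        (1 / 2) * ∑' n : ℤ, |iterConv p L n - iterConv p L (n + 1)| < 1 := by
  classical
  set S : Set ℤ := {m : ℤ | 0 < p (m + nmin)} with hS
  -- reachability submonoid
  set R : AddSubmonoid ℤ :=
    { carrier := {t : ℤ | ∃ L : ℕ, 0 < iterConv p L (t + (L : ℤ) * nmin)}
      zero_mem' := ⟨0, by simp [iterConv]⟩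
      add_mem' := by
        rintro x y ⟨L1, h1⟩ ⟨L2, h2⟩
        refine ⟨L1 + L2, ?_⟩
        have := iterConv_add_pos p hpnn hfin h1 h2
        have heq : x + (L1 : ℤ) * nmin + (y + (L2 : ℤ) * nmin)
            = x + y + ((L1 + L2 : ℕ) : ℤ) * nmin := by push_cast; ring
        rwa [heq] at this } with hR
  have hSR : S ⊆ R := by
    intro m hm
    refine ⟨1, ?_⟩
    rw [iterConv_one']
    have hm' : 0 < p (m + nmin) := hm
    simpa using hm'
  have hMR : AddSubmonoid.closure S ≤ R := AddSubmonoid.closure_le.2 hSR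
  obtain ⟨a, b, haM, hbM, hab⟩ := exists_consec S hgcd
  obtain ⟨L2, ha2⟩ := hMR haM
  obtain ⟨L1, hb1⟩ := hMR hbM
  set N : ℕ := L1 + L2 + 1 with hN
  have hbN : 0 < iterConv p N (b + (N : ℤ) * nmin) := by
    have := iterConv_pad p hpnn hfin hnmin hb1 (L2 + 1)
    have heq : b + (L1 : ℤ) * nmin + ((L2 + 1 : ℕ) : ℤ) * nmin
        = b + (N : ℤ) * nmin := by push_cast [hN]; ring
    have heL : L1 + (L2 + 1) = N := by omega
    rwa [heq, heL] at this
  have haN : 0 < iterConv p N (a + (N : ℤ) * nmin) := by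
    have := iterConv_pad p hpnn hfin hnmin ha2 (L1 + 1)
    have heq : a + (L2 : ℤ) * nmin + ((L1 + 1 : ℕ) : ℤ) * nmin
        = a + (N : ℤ) * nmin := by push_cast [hN]; ring
    have heL : L2 + (L1 + 1) = N := by omega
    rwa [heq, heL] at this
  set L : ℕ := N + N with hL
  set K : ℤ := (a + (N : ℤ) * nmin) + (b + (N : ℤ) * nmin) with hK
  have hKpos : 0 < iterConv p L K := iterConv_add_pos p hpnn hfin haN hbN
  have hK1pos : 0 < iterConv p L (K - 1) := by
    have := iterConv_add_pos p hpnn hfin hbN hbN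
    have heq : (b + (N : ℤ) * nmin) + (b + (N : ℤ) * nmin) = K - 1 := by
      rw [hK, hab]; ring
    rwa [heq] at this
  refine ⟨L, by omega, K, hKpos, hK1pos, ?_⟩
  exact tv_lt_one (iterConv p L) (iterConv_nonneg p hpnn L)
    (iterConv_support_finite p hfin L) (iterConv_tsum p hfin hsum L) hKpos hK1pos
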